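/- Let (A, φ) be a non-commutative probability space and let {(A_{k,l}, A_{k,r}) : k ∈ K} be a family of pairs of (not necessarily unital) subalgebras of A. Then the family is bi-Boolean independent if and only if for every n ≥ 2, every χ : {1,…,n} → {l,r}, every non-constant map ω : {1,…,n} → K, and all elements a_j ∈ A_{ω(j), χ(j)} (j = 1,…,n), the mixed Boolean (l,r)-cumulant vanishes: B_χ(a₁,…,aₙ) = 0. -/

import Mathlib

open scoped BigOperators

/-- Rank realizing the χ-order: left indices in increasing order, then right indices
in decreasing order. `true` stands for `l`, `false` for `r`. -/
def chiRank {n : ℕ} (χ : Fin n → Bool) (i : Fin n) : ℕ :=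
  if χ i then (i : ℕ) else 2 * n - (i : ℕ)

/-- The strict order `≺_χ`. -/
def chiLT {n : ℕ} (χ : Fin n → Bool) (i j : Fin n) : Prop :=
  chiRank χ i < chiRank χ j

/-- A finset is a χ-interval iff it is order-convex for `≺_χ`. -/
def IsChiInterval {n : ℕ} (χ : Fin n → Bool) (V : Finset (Fin n)) : Prop :=
  ∀ i j k : Fin n, i ∈ V → k ∈ V → chiLT χ i j → chiLT χ j k → j ∈ V

/-- A set partition of `{1, …, n}` encoded as a finset of (nonempty) blocks. -/
def IsPartition {n : ℕ} (P : Finset (Finset (Fin n))) : Prop :=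
  (∅ ∉ P) ∧ ∀ i : Fin n, ∃! V : Finset (Fin n), V ∈ P ∧ i ∈ V

open scoped Classical in
/-- The set of bi-interval partitions relative to χ. -/
noncomputable def BIset {n : ℕ} (χ : Fin n → Bool) : Finset (Finset (Finset (Fin n))) :=
  Finset.univ.filter (fun P => IsPartition P ∧ ∀ V ∈ P, IsChiInterval χ V)

/-- `φ_V(a₁,…,aₙ)`: apply φ to the product of the `a_i`, `i ∈ V`, in increasing index order. -/
def phiV {A : Type*} [Monoid A] (φ : A → ℂ) {n : ℕ} (a : Fin n → A) (V : Finset (Fin n)) : ℂ :=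
  φ ((V.sort (· ≤ ·)).map a).prod

/-- The Boolean (l,r)-cumulant `B_χ`. -/
noncomputable def Bcum {A : Type*} [Monoid A] (φ : A → ℂ) {n : ℕ} (χ : Fin n → Bool)
    (a : Fin n → A) : ℂ :=
  ∑ P ∈ BIset χ, (-1 : ℂ) ^ (P.card - 1) * ∏ V ∈ P, phiV φ a V

/-- The list of indices `1, …, n` sorted in the `≺_χ` order. -/
def chiSorted {n : ℕ} (χ : Fin n → Bool) : List (Fin n) :=
  (List.finRange n).mergeSort (fun i j => chiRank χ i ≤ chiRank χ j)

/-- `P` refines `Q`. -/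
def Refines {n : ℕ} (P Q : Finset (Finset (Fin n))) : Prop :=
  ∀ V ∈ P, ∃ W ∈ Q, V ⊆ W

/-- Every block of `P` lies inside a level set of `ω`. -/
def KernelPart {n : ℕ} {K : Type*} (ω : Fin n → K) (P : Finset (Finset (Fin n))) : Prop :=
  ∀ V ∈ P, ∀ i ∈ V, ∀ j ∈ V, ω i = ω j

/-- `P` is the largest bi-interval partition relative to χ all of whose blocks are
contained in level sets of ω, i.e. `P = π_{ω,χ}`. -/
def IsMaxKernelBI {n : ℕ} {K : Type*} (χ : Fin n → Bool) (ω : Fin n → K)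
    (P : Finset (Finset (Fin n))) : Prop :=
  P ∈ BIset χ ∧ KernelPart ω P ∧ ∀ Q ∈ BIset χ, KernelPart ω Q → Refines Q P

/-- Bi-Boolean independence of a family of pairs of non-unital subalgebras. -/
def BiBooleanIndep {A : Type*} [Ring A] [Algebra ℂ A] (φ : A → ℂ) {K : Type*}
    (Al Ar : K → NonUnitalSubalgebra ℂ A) : Prop :=
  ∀ n : ℕ, 1 ≤ n → ∀ χ : Fin n → Bool, ∀ ω : Fin n → K, ∀ a : Fin n → A,
    (∀ i, a i ∈ (if χ i then Al (ω i) else Ar (ω i))) →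
    ∀ P : Finset (Finset (Fin n)), IsMaxKernelBI χ ω P →
      φ (List.ofFn a).prod = ∏ V ∈ P, phiV φ a V


set_option linter.unusedSectionVars false
section Infra

open Finset

variable {n : ℕ} [NeZero n]

noncomputable def pickMax (s : Finset (Fin n)) (f : Fin n → ℕ) : Fin n :=
  if h : s.Nonempty then (s.exists_max_image f h).choose else default

lemma pickMax_mem {s : Finset (Fin n)} {f : Fin n → ℕ} (h : s.Nonempty) :
    pickMax s f ∈ s := by
  rw [pickMax, dif_pos h]
  exact (s.exists_max_image f h).choose_spec.1

lemma le_pickMax {s : Finset (Fin n)} {f : Fin n → ℕ} {a : Fin n} (ha : a ∈ s) :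
    f a ≤ f (pickMax s f) := by
  have h : s.Nonempty := ⟨a, ha⟩
  rw [pickMax, dif_pos h]
  exact (s.exists_max_image f h).choose_spec.2 a ha

noncomputable def pickMin (s : Finset (Fin n)) (f : Fin n → ℕ) : Fin n :=
  if h : s.Nonempty then (s.exists_min_image f h).choose else default

lemma pickMin_mem {s : Finset (Fin n)} {f : Fin n → ℕ} (h : s.Nonempty) :
    pickMin s f ∈ s := by
  rw [pickMin, dif_pos h]
  exact (s.exists_min_image f h).choose_spec.1

lemma pickMin_le {s : Finset (Fin n)} {f : Fin n → ℕ} {a : Fin n} (ha : a ∈ s) :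
    f (pickMin s f) ≤ f a := by
  have h : s.Nonempty := ⟨a, ha⟩
  rw [pickMin, dif_pos h]
  exact (s.exists_min_image f h).choose_spec.2 a ha

variable (χ : Fin n → Bool)

lemma chiRank_injective : Function.Injective (chiRank χ) := by
  intro i j h
  have hi := i.isLt; have hj := j.isLt
  apply Fin.ext
  rcases hci : χ i <;> rcases hcj : χ j <;> simp [chiRank, hci, hcj] at h <;> omega

noncomputable def chiMin : Fin n := pickMin univ (chiRank χ)

lemma chiMin_le (i : Fin n) : chiRank χ (chiMin χ) ≤ chiRank χ i :=
  pickMin_le (mem_univ i)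

lemma chiMin_lt {j : Fin n} (hj : j ≠ chiMin χ) : chiRank χ (chiMin χ) < chiRank χ j :=
  lt_of_le_of_ne (chiMin_le χ j) (fun h => hj (chiRank_injective χ h.symm))

noncomputable def predOf (j : Fin n) : Fin n :=
  pickMax (univ.filter (fun k => chiRank χ k < chiRank χ j)) (chiRank χ)

lemma predOf_lt {j : Fin n} (hj : j ≠ chiMin χ) : chiRank χ (predOf χ j) < chiRank χ j := by
  have h : (univ.filter (fun k => chiRank χ k < chiRank χ j)).Nonempty :=
    ⟨chiMin χ, by simp [chiMin_lt χ hj]⟩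
  have := pickMax_mem (f := chiRank χ) h
  rw [mem_filter] at this
  exact this.2

lemma le_predOf {k j : Fin n} (hk : chiRank χ k < chiRank χ j) :
    chiRank χ k ≤ chiRank χ (predOf χ j) :=
  le_pickMax (by simp [hk])

noncomputable def startOf (C : Finset (Fin n)) (j : Fin n) : Fin n :=
  pickMax ((insert (chiMin χ) C).filter (fun k => chiRank χ k ≤ chiRank χ j)) (chiRank χ)

variable {C C' : Finset (Fin n)} {j k : Fin n}

lemma startOf_filter_nonempty (C : Finset (Fin n)) (j : Fin n) :
    (((insert (chiMin χ) C)).filter (fun k => chiRank χ k ≤ chiRank χ j)).Nonempty :=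
  ⟨chiMin χ, by simp [chiMin_le χ j]⟩

lemma startOf_mem_insert : startOf χ C j ∈ insert (chiMin χ) C := by
  have := pickMax_mem (f := chiRank χ) (startOf_filter_nonempty χ C j)
  rw [mem_filter] at this
  exact this.1

lemma startOf_rank_le : chiRank χ (startOf χ C j) ≤ chiRank χ j := by
  have := pickMax_mem (f := chiRank χ) (startOf_filter_nonempty χ C j)
  rw [mem_filter] at this
  exact this.2

lemma le_startOf {c : Fin n} (hc : c ∈ insert (chiMin χ) C) (h : chiRank χ c ≤ chiRank χ j) :
    chiRank χ c ≤ chiRank χ (startOf χ C j) :=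
  le_pickMax (by simp [mem_filter, hc, h])

lemma startOf_unique {s : Fin n} (hs : s ∈ insert (chiMin χ) C) (h1 : chiRank χ s ≤ chiRank χ j)
    (h2 : ∀ c ∈ insert (chiMin χ) C, chiRank χ c ≤ chiRank χ j → chiRank χ c ≤ chiRank χ s) :
    startOf χ C j = s :=
  chiRank_injective χ (le_antisymm (h2 _ (startOf_mem_insert χ) (startOf_rank_le χ))
    (le_startOf χ hs h1))

lemma startOf_self {c : Fin n} (hc : c ∈ insert (chiMin χ) C) : startOf χ C c = c :=
  startOf_unique χ hc le_rfl (fun _ _ h => h)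

lemma startOf_sandwich (h1 : chiRank χ (startOf χ C j) ≤ chiRank χ k)
    (h2 : chiRank χ k ≤ chiRank χ j) : startOf χ C k = startOf χ C j := by
  refine startOf_unique χ (startOf_mem_insert χ) h1 (fun c hc hck => ?_)
  exact le_startOf χ hc (hck.trans h2)

lemma startOf_startOf : startOf χ C (startOf χ C j) = startOf χ C j :=
  startOf_self χ (startOf_mem_insert χ)

lemma startOf_mono (hCC' : C ⊆ C') : startOf χ C (startOf χ C' j) = startOf χ C j := by
  refine startOf_sandwich χ ?_ (startOf_rank_le χ)
  have hmem : startOf χ C j ∈ insert (chiMin χ) C' := by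
    rcases Finset.mem_insert.1 (startOf_mem_insert χ (C := C) (j := j)) with h | h
    · exact h ▸ mem_insert_self _ _
    · exact mem_insert_of_mem (hCC' h)
  exact le_startOf χ hmem (startOf_rank_le χ)

lemma startOf_pred (hj1 : j ≠ chiMin χ) (hj2 : j ∉ insert (chiMin χ) C) :
    startOf χ C (predOf χ j) = startOf χ C j := by
  refine startOf_sandwich χ ?_ (le_of_lt (predOf_lt χ hj1))
  have hne : startOf χ C j ≠ j := fun h => hj2 (h ▸ startOf_mem_insert χ)
  have : chiRank χ (startOf χ C j) < chiRank χ j :=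
    lt_of_le_of_ne (startOf_rank_le χ) (fun h => hne (chiRank_injective χ h))
  exact le_predOf χ this

end Infra

section Part2

open Finset

variable {n : ℕ} [NeZero n] (χ : Fin n → Bool) {K : Type*}

lemma mem_BIset {P : Finset (Finset (Fin n))} :
    P ∈ BIset χ ↔ IsPartition P ∧ ∀ V ∈ P, IsChiInterval χ V := by
  simp [BIset]

noncomputable def blkOf (C : Finset (Fin n)) (j : Fin n) : Finset (Fin n) :=
  univ.filter (fun k => startOf χ C k = startOf χ C j)

variable {C C' : Finset (Fin n)} {j k : Fin n}

lemma mem_blkOf : k ∈ blkOf χ C j ↔ startOf χ C k = startOf χ C j := by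
  simp [blkOf]

lemma self_mem_blkOf : j ∈ blkOf χ C j := (mem_blkOf χ).2 rfl

lemma blkOf_eq_of_mem (h : k ∈ blkOf χ C j) : blkOf χ C k = blkOf χ C j := by
  rw [mem_blkOf] at h
  ext x; rw [mem_blkOf, mem_blkOf, h]

lemma startOf_mem_blkOf : startOf χ C j ∈ blkOf χ C j :=
  (mem_blkOf χ).2 (startOf_startOf χ)

lemma blkOf_rank_le (h : k ∈ blkOf χ C j) : chiRank χ (startOf χ C j) ≤ chiRank χ k := by
  rw [mem_blkOf] at h
  rw [← h]; exact startOf_rank_le χ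

lemma blkOf_interval : IsChiInterval χ (blkOf χ C j) := by
  intro i x k hi hk hix hxk
  rw [mem_blkOf]
  have h1 : chiRank χ (startOf χ C j) ≤ chiRank χ x :=
    le_trans (blkOf_rank_le χ hi) (le_of_lt hix)
  have h2 : chiRank χ x ≤ chiRank χ k := le_of_lt hxk
  have hk' : startOf χ C k = startOf χ C j := (mem_blkOf χ).1 hk
  rw [← hk'] at h1
  rw [startOf_sandwich χ h1 (h2.trans (le_of_eq rfl)), hk']

lemma blkOf_mono (hCC' : C ⊆ C') : blkOf χ C' j ⊆ blkOf χ C j := by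
  intro k hk
  rw [mem_blkOf] at hk ⊢
  rw [← startOf_mono χ hCC' (j := k), hk, startOf_mono χ hCC']

lemma eq_startOf_of_mem_insert (hc : k ∈ insert (chiMin χ) C) (h : k ∈ blkOf χ C j) :
    k = startOf χ C j := by
  rw [mem_blkOf] at h
  rw [← h, startOf_self χ hc]

noncomputable def Pc (C : Finset (Fin n)) : Finset (Finset (Fin n)) :=
  univ.image (blkOf χ C)

lemma mem_Pc {V : Finset (Fin n)} : V ∈ Pc χ C ↔ ∃ j, blkOf χ C j = V := by
  simp [Pc]

lemma Pc_isPartition : IsPartition (Pc χ C) := by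
  constructor
  · intro h
    obtain ⟨j, hj⟩ := (mem_Pc χ).1 h
    exact absurd (hj ▸ self_mem_blkOf χ (C := C) (j := j)) (Finset.notMem_empty j)
  · intro i
    refine ⟨blkOf χ C i, ⟨(mem_Pc χ).2 ⟨i, rfl⟩, self_mem_blkOf χ⟩, ?_⟩
    rintro V ⟨hV, hiV⟩
    obtain ⟨j, rfl⟩ := (mem_Pc χ).1 hV
    exact (blkOf_eq_of_mem χ hiV).symm

lemma Pc_mem_BIset : Pc χ C ∈ BIset χ := by
  rw [mem_BIset]
  refine ⟨Pc_isPartition χ, fun V hV => ?_⟩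
  obtain ⟨j, rfl⟩ := (mem_Pc χ).1 hV
  exact blkOf_interval χ

lemma Pc_image_insert : Pc χ C = (insert (chiMin χ) C).image (blkOf χ C) := by
  ext V
  rw [mem_Pc, Finset.mem_image]
  constructor
  · rintro ⟨j, rfl⟩
    exact ⟨startOf χ C j, startOf_mem_insert χ, blkOf_eq_of_mem χ (startOf_mem_blkOf χ)⟩
  · rintro ⟨c, _, rfl⟩
    exact ⟨c, rfl⟩

lemma card_Pc (hC : chiMin χ ∉ C) : (Pc χ C).card = C.card + 1 := by
  rw [Pc_image_insert, Finset.card_image_of_injOn, Finset.card_insert_of_notMem hC]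
  intro c hc c' hc' h
  have : c ∈ blkOf χ C c' := h ▸ self_mem_blkOf χ
  rw [eq_startOf_of_mem_insert χ hc this, startOf_self χ hc']

lemma pickMin_blkOf : pickMin (blkOf χ C j) (chiRank χ) = startOf χ C j := by
  apply chiRank_injective χ
  apply le_antisymm
  · exact pickMin_le (startOf_mem_blkOf χ)
  · exact blkOf_rank_le χ (pickMin_mem ⟨j, self_mem_blkOf χ⟩)

lemma image_startOf : univ.image (fun j => startOf χ C j) = insert (chiMin χ) C := by
  ext c
  rw [Finset.mem_image]
  constructor
  · rintro ⟨j, _, rfl⟩; exact startOf_mem_insert χ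
  · intro hc; exact ⟨c, mem_univ c, startOf_self χ hc⟩

noncomputable def recoverC (P : Finset (Finset (Fin n))) : Finset (Fin n) :=
  (P.image (fun V => pickMin V (chiRank χ))).erase (chiMin χ)

lemma recoverC_Pc (hC : chiMin χ ∉ C) : recoverC χ (Pc χ C) = C := by
  rw [recoverC, Pc, Finset.image_image]
  have : ((fun V => pickMin V (chiRank χ)) ∘ blkOf χ C) = fun j => startOf χ C j := by
    funext j; exact pickMin_blkOf χ
  rw [this, image_startOf, Finset.erase_insert hC]

lemma exists_C_of_BIset {P : Finset (Finset (Fin n))} (hP : P ∈ BIset χ) :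
    ∃ C, C ⊆ univ.erase (chiMin χ) ∧ Pc χ C = P := by
  obtain ⟨hPart, hInt⟩ := (mem_BIset χ).1 hP
  choose B hB using fun i => (hPart.2 i).exists
  have hBuniq : ∀ (i : Fin n) (V : Finset (Fin n)), V ∈ P → i ∈ V → V = B i := by
    intro i V hV hiV
    exact (hPart.2 i).unique ⟨hV, hiV⟩ (hB i)
  set theMin : Fin n → Fin n := fun i => pickMin (B i) (chiRank χ) with htheMin
  have hMinMem : ∀ i, theMin i ∈ B i := fun i => pickMin_mem ⟨i, (hB i).2⟩
  have hMinLe : ∀ i, ∀ k ∈ B i, chiRank χ (theMin i) ≤ chiRank χ k := fun i k hk => pickMin_le hk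
  set C : Finset (Fin n) := (univ.image theMin).erase (chiMin χ) with hC
  have key : ∀ j, startOf χ C j = theMin j := by
    intro j
    apply startOf_unique χ
    · by_cases h : theMin j = chiMin χ
      · rw [h]; exact mem_insert_self _ _
      · exact mem_insert_of_mem (Finset.mem_erase.2 ⟨h, Finset.mem_image_of_mem _ (mem_univ j)⟩)
    · exact hMinLe j j (hB j).2
    · intro c hc hcj
      by_contra hlt
      push_neg at hlt
      have hcm : c ≠ chiMin χ := by
        intro h
        exact absurd (h ▸ chiMin_le χ (theMin j)) (by omega)
      have hcC : c ∈ C := (Finset.mem_insert.1 hc).resolve_left hcm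
      obtain ⟨i, _, hi⟩ := Finset.mem_image.1 (Finset.mem_of_mem_erase hcC)
      have hcBj : c ∈ B j := by
        rcases lt_or_eq_of_le hcj with h | h
        · exact hInt (B j) (hB j).1 (theMin j) c j (hMinMem j) (hB j).2 hlt h
        · rw [chiRank_injective χ h]; exact (hB j).2
      have : B i = B j := by
        rw [← hi] at hcBj
        exact (hBuniq (theMin i) (B i) (hB i).1 (hMinMem i)).trans
          (hBuniq (theMin i) (B j) (hB j).1 hcBj).symm
      rw [← hi, htheMin] at hlt
      simp only [this] at hlt
      omega
  have hblk : ∀ j, blkOf χ C j = B j := by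
    intro j
    ext k
    rw [mem_blkOf, key, key]
    constructor
    · intro h
      have h1 : theMin j ∈ B k := h ▸ hMinMem k
      have : B k = B j := (hBuniq (theMin j) (B k) (hB k).1 h1).trans
        (hBuniq (theMin j) (B j) (hB j).1 (hMinMem j)).symm
      exact this ▸ (hB k).2
    · intro h
      have hBk : B j = B k := hBuniq k (B j) (hB j).1 h
      show pickMin (B k) (chiRank χ) = pickMin (B j) (chiRank χ)
      rw [← hBk]
  refine ⟨C, fun c hcC => Finset.mem_erase.2 ⟨(Finset.mem_erase.1 hcC).1, mem_univ c⟩, ?_⟩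
  ext V
  rw [mem_Pc]
  constructor
  · rintro ⟨j, rfl⟩
    rw [hblk]; exact (hB j).1
  · intro hV
    have hne : V.Nonempty := Finset.nonempty_iff_ne_empty.2 (fun h => hPart.1 (h ▸ hV))
    obtain ⟨j, hj⟩ := hne
    exact ⟨j, (hblk j).trans (hBuniq j V hV hj).symm⟩

open scoped Classical in
noncomputable def cutsOf (ω : Fin n → K) : Finset (Fin n) :=
  (univ.erase (chiMin χ)).filter (fun j => ω (predOf χ j) ≠ ω j)

variable {ω : Fin n → K}

lemma mem_cutsOf {j : Fin n} : j ∈ cutsOf χ ω ↔ j ≠ chiMin χ ∧ ω (predOf χ j) ≠ ω j := by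
  simp [cutsOf]

lemma chiMin_not_mem_cutsOf : chiMin χ ∉ cutsOf χ ω := by
  rw [mem_cutsOf]; tauto

lemma cutsOf_subset : cutsOf χ ω ⊆ univ.erase (chiMin χ) := by
  intro j hj
  exact Finset.mem_erase.2 ⟨((mem_cutsOf χ).1 hj).1, mem_univ j⟩

lemma omega_startOf_cutsOf : ∀ j, ω (startOf χ (cutsOf χ ω) j) = ω j := by
  set D := cutsOf χ ω with hD
  suffices H : ∀ r, ∀ j, chiRank χ j ≤ r → ω (startOf χ D j) = ω j from fun j => H _ j le_rfl
  intro r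
  induction r with
  | zero =>
    intro j hj
    have : j = chiMin χ := chiRank_injective χ (by have := chiMin_le χ j; omega)
    rw [this, startOf_self χ (mem_insert_self _ _)]
  | succ r IH =>
    intro j hj
    by_cases hins : j ∈ insert (chiMin χ) D
    · rw [startOf_self χ hins]
    · have hjm : j ≠ chiMin χ := fun h => hins (h ▸ mem_insert_self _ _)
      have hpred : ω (predOf χ j) = ω j := by
        by_contra h
        exact hins (mem_insert_of_mem ((mem_cutsOf χ).2 ⟨hjm, h⟩))
      have hlt := predOf_lt χ hjm
      rw [← startOf_pred χ hjm hins, IH _ (by omega), hpred]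

lemma kernelPart_Pc_cutsOf : KernelPart ω (Pc χ (cutsOf χ ω)) := by
  intro V hV i hi j hj
  obtain ⟨x, rfl⟩ := (mem_Pc χ).1 hV
  rw [mem_blkOf] at hi hj
  have h1 := omega_startOf_cutsOf (ω := ω) χ i
  have h2 := omega_startOf_cutsOf (ω := ω) χ j
  rw [← h1, ← h2, hi, hj]

lemma refines_Pc_cutsOf {Q : Finset (Finset (Fin n))} (hQ : Q ∈ BIset χ)
    (hker : KernelPart ω Q) : Refines Q (Pc χ (cutsOf χ ω)) := by
  obtain ⟨hPart, hInt⟩ := (mem_BIset χ).1 hQ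
  set D := cutsOf χ ω with hD
  intro V hV
  have hne : V.Nonempty := Finset.nonempty_iff_ne_empty.2 (fun h => hPart.1 (h ▸ hV))
  set v₀ := pickMin V (chiRank χ) with hv₀
  refine ⟨blkOf χ D v₀, (mem_Pc χ).2 ⟨v₀, rfl⟩, ?_⟩
  suffices H : ∀ r, ∀ j ∈ V, chiRank χ j ≤ r → startOf χ D j = startOf χ D v₀ from
    fun j hj => (mem_blkOf χ).2 (H _ j hj le_rfl)
  intro r
  induction r with
  | zero =>
    intro j hj hr
    have h := pickMin_le (f := chiRank χ) hj
    rw [← hv₀] at h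
    have : j = v₀ := chiRank_injective χ (by omega)
    rw [this]
  | succ r IH =>
    intro j hj hr
    by_cases hjv : j = v₀
    · rw [hjv]
    · have hlt : chiRank χ v₀ < chiRank χ j :=
        lt_of_le_of_ne (pickMin_le hj) (fun h => hjv (chiRank_injective χ h).symm)
      have hjm : j ≠ chiMin χ := by
        intro h
        have := chiMin_le χ v₀
        rw [h] at hlt; omega
      have hplt := predOf_lt χ hjm
      have hpge : chiRank χ v₀ ≤ chiRank χ (predOf χ j) := le_predOf χ hlt
      have hpV : predOf χ j ∈ V := by
        rcases lt_or_eq_of_le hpge with h | h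
        · exact hInt V hV v₀ (predOf χ j) j (pickMin_mem hne) hj h hplt
        · rw [← chiRank_injective χ h]; exact pickMin_mem hne
      have hpω : ω (predOf χ j) = ω j := hker V hV _ hpV _ hj
      have hjins : j ∉ insert (chiMin χ) D := by
        intro h
        rcases Finset.mem_insert.1 h with h' | h'
        · exact hjm h'
        · exact ((mem_cutsOf χ).1 h').2 hpω
      rw [← startOf_pred χ hjm hjins, IH _ hpV (by omega)]

lemma isMaxKernelBI_Pc_cutsOf : IsMaxKernelBI χ ω (Pc χ (cutsOf χ ω)) :=
  ⟨Pc_mem_BIset χ, kernelPart_Pc_cutsOf χ, fun Q hQ hker => refines_Pc_cutsOf χ hQ hker⟩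

lemma refines_antisymm {P Q : Finset (Finset (Fin n))} (hP : IsPartition P) (hQ : IsPartition Q)
    (h1 : Refines P Q) (h2 : Refines Q P) : P = Q := by
  have main : ∀ P' Q' : Finset (Finset (Fin n)), IsPartition P' → Refines P' Q' →
      Refines Q' P' → P' ⊆ Q' := by
    intro P' Q' hP' h1' h2' V hV
    obtain ⟨W, hW, hVW⟩ := h1' V hV
    obtain ⟨V', hV', hWV'⟩ := h2' W hW
    have hne : V.Nonempty := Finset.nonempty_iff_ne_empty.2 (fun h => hP'.1 (h ▸ hV))
    obtain ⟨i, hi⟩ := hne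
    have : V = V' := (hP'.2 i).unique ⟨hV, hi⟩ ⟨hV', hWV' (hVW hi)⟩
    have : W = V := le_antisymm (this ▸ hWV') hVW
    exact this ▸ hW
  exact le_antisymm (main P Q hP h1 h2) (main Q P hQ h2 h1)

lemma isMaxKernelBI_unique {P : Finset (Finset (Fin n))} (h : IsMaxKernelBI χ ω P) :
    P = Pc χ (cutsOf χ ω) := by
  obtain ⟨hP, hker, hmax⟩ := h
  apply refines_antisymm ((mem_BIset χ).1 hP).1 ((mem_BIset χ).1 (Pc_mem_BIset χ)).1
  · exact refines_Pc_cutsOf χ hP hker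
  · exact hmax _ (Pc_mem_BIset χ) (kernelPart_Pc_cutsOf χ)

lemma constant_of_cutsOf_eq_empty (h : cutsOf χ ω = ∅) : ∀ i j : Fin n, ω i = ω j := by
  suffices H : ∀ r, ∀ j, chiRank χ j ≤ r → ω j = ω (chiMin χ) by
    intro i j; rw [H _ i le_rfl, H _ j le_rfl]
  intro r
  induction r with
  | zero =>
    intro j hj
    have hm := chiMin_le χ j
    rw [chiRank_injective χ (show chiRank χ j = chiRank χ (chiMin χ) by omega)]
  | succ r IH =>
    intro j hj
    by_cases hjm : j = chiMin χ
    · rw [hjm]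
    · have hpω : ω (predOf χ j) = ω j := by
        by_contra hc
        have : j ∈ cutsOf χ ω := (mem_cutsOf χ).2 ⟨hjm, hc⟩
        rw [h] at this
        exact absurd this (Finset.notMem_empty j)
      have hlt := predOf_lt χ hjm
      rw [← hpω]
      exact IH _ (by omega)

lemma cutsOf_eq_empty_of_constant (h : ∀ i j : Fin n, ω i = ω j) : cutsOf χ ω = ∅ := by
  ext j
  simp only [mem_cutsOf, Finset.notMem_empty, iff_false, not_and, ne_eq, not_not]
  intro _
  exact h _ _

lemma cutsOf_nonempty (h : ¬ ∀ i j : Fin n, ω i = ω j) : (cutsOf χ ω).Nonempty := by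
  rw [Finset.nonempty_iff_ne_empty]
  intro he
  exact h (constant_of_cutsOf_eq_empty χ he)

lemma Pc_empty : Pc χ (∅ : Finset (Fin n)) = {univ} := by
  have hs : ∀ j : Fin n, startOf χ ∅ j = chiMin χ := by
    intro j
    have := startOf_mem_insert χ (C := (∅ : Finset (Fin n))) (j := j)
    simpa using this
  have hb : ∀ j : Fin n, blkOf χ ∅ j = univ := by
    intro j
    ext k
    simp [mem_blkOf, hs]
  rw [Pc]
  rw [show blkOf χ (∅ : Finset (Fin n)) = fun _ => univ from funext hb]
  rw [Finset.image_const univ_nonempty]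

lemma card_blk_lt (hC : C ⊆ univ.erase (chiMin χ)) (hCne : C.Nonempty) {V : Finset (Fin n)}
    (hV : V ∈ Pc χ C) : V.card < n := by
  obtain ⟨c, hc⟩ := hCne
  have hcm : c ≠ chiMin χ := (Finset.mem_erase.1 (hC hc)).1
  obtain ⟨j, rfl⟩ := (mem_Pc χ).1 hV
  by_cases h : startOf χ C j = c
  · have : chiMin χ ∉ blkOf χ C j := by
      intro hmem
      have := eq_startOf_of_mem_insert χ (mem_insert_self _ _) hmem
      rw [h] at this
      exact hcm this.symm
    calc (blkOf χ C j).card ≤ (univ.erase (chiMin χ)).card := by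
          apply Finset.card_le_card
          intro x hx
          exact Finset.mem_erase.2 ⟨fun he => this (he ▸ hx), mem_univ x⟩
      _ < n := by rw [Finset.card_erase_of_mem (mem_univ _), Finset.card_univ, Fintype.card_fin]
                  have := Fin.pos_iff_nonempty (n := n)
                  omega
  · have : c ∉ blkOf χ C j := by
      intro hmem
      exact h (eq_startOf_of_mem_insert χ (mem_insert_of_mem hc) hmem).symm
    calc (blkOf χ C j).card ≤ (univ.erase c).card := by
          apply Finset.card_le_card
          intro x hx
          exact Finset.mem_erase.2 ⟨fun he => this (he ▸ hx), mem_univ x⟩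
      _ < n := by rw [Finset.card_erase_of_mem (mem_univ _), Finset.card_univ, Fintype.card_fin]
                  have := Fin.pos_iff_nonempty (n := n)
                  omega

end Part2

section Part3

open Finset

variable {n : ℕ} [NeZero n] (χ : Fin n → Bool) {K : Type*}

lemma predOf_unique {x j : Fin n} (hx : chiRank χ x < chiRank χ j)
    (hmax : ∀ y, chiRank χ y < chiRank χ j → chiRank χ y ≤ chiRank χ x) :
    predOf χ j = x := by
  have hj : j ≠ chiMin χ := by
    intro h
    have := chiMin_le χ x
    rw [h] at hx; omega
  exact chiRank_injective χ (le_antisymm (hmax _ (predOf_lt χ hj)) (le_predOf χ hx))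

def embOf (V : Finset (Fin n)) (i : Fin V.card) : Fin n :=
  (V.sort (· ≤ ·)).get ⟨i.1, by rw [Finset.length_sort]; exact i.2⟩

variable {V : Finset (Fin n)}

lemma embOf_mem (i : Fin V.card) : embOf V i ∈ V :=
  (Finset.mem_sort (· ≤ ·)).1 (List.get_mem _ _)

lemma embOf_strictMono : StrictMono (embOf (n := n) V) := by
  intro i j h
  have hs : List.SortedLT (V.sort (· ≤ ·)) := Finset.sortedLT_sort V
  exact hs.strictMono_get
    (show ((⟨i.1, by rw [Finset.length_sort]; exact i.2⟩ : Fin (V.sort (· ≤ ·)).length)) <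
      ⟨j.1, by rw [Finset.length_sort]; exact j.2⟩ from h)

lemma embOf_injective : Function.Injective (embOf (n := n) V) :=
  embOf_strictMono.injective

lemma embOf_lt_iff {i j : Fin V.card} : embOf V i < embOf V j ↔ i < j :=
  embOf_strictMono.lt_iff_lt

lemma embOf_surjOn {x : Fin n} (hx : x ∈ V) : ∃ i, embOf V i = x := by
  have : x ∈ V.sort (· ≤ ·) := (Finset.mem_sort (· ≤ ·)).2 hx
  obtain ⟨i, hi⟩ := List.mem_iff_get.1 this
  refine ⟨⟨i.1, by rw [← Finset.length_sort (α := Fin n) (· ≤ ·) (s := V)]; exact i.2⟩, ?_⟩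
  rw [← hi]
  rfl

lemma ofFn_embOf : List.ofFn (embOf V) = V.sort (· ≤ ·) := by
  apply List.ext_get
  · simp [Finset.length_sort]
  · intro i h1 h2
    rw [List.get_ofFn]
    rfl

lemma card_le_n : V.card ≤ n := by
  have := Finset.card_le_univ V
  simpa using this

lemma chiRank_emb_lt_iff (i j : Fin V.card) :
    chiRank (χ ∘ embOf V) i < chiRank (χ ∘ embOf V) j ↔
      chiRank χ (embOf V i) < chiRank χ (embOf V j) := by
  have h1 : ((i : ℕ) < (j : ℕ)) ↔ ((embOf V i : ℕ) < (embOf V j : ℕ)) := by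
    constructor
    · intro h; exact embOf_strictMono (show i < j from h)
    · intro h; exact embOf_lt_iff.1 h
  have h2 : ((j : ℕ) < (i : ℕ)) ↔ ((embOf V j : ℕ) < (embOf V i : ℕ)) := by
    constructor
    · intro h; exact embOf_strictMono (show j < i from h)
    · intro h; exact embOf_lt_iff.1 h
  have hi := i.isLt; have hj := j.isLt
  have hei := (embOf V i).isLt; have hej := (embOf V j).isLt
  have hcard : V.card ≤ n := card_le_n
  unfold chiRank
  simp only [Function.comp_apply]
  split_ifs <;> omega

lemma chiRank_emb_le_iff (i j : Fin V.card) :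
    chiRank (χ ∘ embOf V) i ≤ chiRank (χ ∘ embOf V) j ↔
      chiRank χ (embOf V i) ≤ chiRank χ (embOf V j) := by
  have h1 := chiRank_emb_lt_iff χ (V := V) i j
  have h2 := chiRank_emb_lt_iff χ (V := V) j i
  omega

variable {C : Finset (Fin n)} {j₀ : Fin n} (ω : Fin n → K)

lemma embOf_chiMin [NeZero V.card] (hW : V = blkOf χ C j₀) :
    embOf V (chiMin (χ ∘ embOf V)) = startOf χ C j₀ := by
  apply chiRank_injective χ
  apply le_antisymm
  · obtain ⟨i, hi⟩ := embOf_surjOn (hW ▸ startOf_mem_blkOf χ (C := C) (j := j₀))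
    rw [← hi]
    exact (chiRank_emb_le_iff χ _ _).1 (chiMin_le _ i)
  · exact blkOf_rank_le χ (hW ▸ embOf_mem _)

lemma embOf_predOf [NeZero V.card] (hW : V = blkOf χ C j₀) (p : Fin V.card)
    (hp : p ≠ chiMin (χ ∘ embOf V)) :
    embOf V (predOf (χ ∘ embOf V) p) = predOf χ (embOf V p) := by
  have hv₀ : embOf V (chiMin (χ ∘ embOf V)) = startOf χ C j₀ := embOf_chiMin χ hW
  have hRv : chiRank χ (startOf χ C j₀) < chiRank χ (embOf V p) := by
    have hle : chiRank χ (startOf χ C j₀) ≤ chiRank χ (embOf V p) :=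
      blkOf_rank_le χ (hW ▸ embOf_mem p)
    rcases lt_or_eq_of_le hle with h | h
    · exact h
    · exact absurd (embOf_injective (hv₀.trans (chiRank_injective χ h))) (Ne.symm hp)
  have hepm : embOf V p ≠ chiMin χ := by
    intro h
    have := chiMin_le χ (startOf χ C j₀)
    rw [h] at hRv; omega
  have hplt := predOf_lt χ hepm
  have hpge : chiRank χ (startOf χ C j₀) ≤ chiRank χ (predOf χ (embOf V p)) := le_predOf χ hRv
  have hpW : predOf χ (embOf V p) ∈ V := by
    rcases lt_or_eq_of_le hpge with h | h
    · exact hW ▸ blkOf_interval χ (startOf χ C j₀) (predOf χ (embOf V p)) (embOf V p)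
        (startOf_mem_blkOf χ) (hW ▸ embOf_mem p) h hplt
    · rw [← chiRank_injective χ h, hW]; exact startOf_mem_blkOf χ
  obtain ⟨q, hq⟩ := embOf_surjOn hpW
  rw [← hq]
  congr 1
  apply predOf_unique (χ ∘ embOf V)
  · apply (chiRank_emb_lt_iff χ q p).2
    rw [hq]; exact hplt
  · intro y hy
    apply (chiRank_emb_le_iff χ y q).2
    rw [hq]
    exact le_predOf χ ((chiRank_emb_lt_iff χ y p).1 hy)

lemma embOf_mem_insert_cuts [NeZero V.card] (hW : V = blkOf χ C j₀) {p : Fin V.card}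
    (hp : p ∈ insert (chiMin (χ ∘ embOf V)) (cutsOf (χ ∘ embOf V) (ω ∘ embOf V))) :
    embOf V p ∈ insert (chiMin χ) (C ∪ cutsOf χ ω) := by
  have hv₀ : embOf V (chiMin (χ ∘ embOf V)) = startOf χ C j₀ := embOf_chiMin χ hW
  rcases Finset.mem_insert.1 hp with h | h
  · rw [h, hv₀]
    rcases Finset.mem_insert.1 (startOf_mem_insert χ (C := C) (j := j₀)) with h' | h'
    · rw [h']; exact mem_insert_self _ _
    · exact mem_insert_of_mem (Finset.mem_union_left _ h')
  · obtain ⟨hpm, hpω⟩ := (mem_cutsOf (χ ∘ embOf V)).1 h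
    have hepm : embOf V p ≠ chiMin χ := by
      intro hh
      have h1 : chiRank χ (startOf χ C j₀) ≤ chiRank χ (embOf V p) :=
        blkOf_rank_le χ (hW ▸ embOf_mem p)
      have h2 := chiMin_le χ (startOf χ C j₀)
      have h3 : chiRank χ (embOf V p) = chiRank χ (startOf χ C j₀) := by
        rw [hh] at h1 ⊢; omega
      exact hpm (embOf_injective ((chiRank_injective χ h3).trans hv₀.symm))
    refine mem_insert_of_mem (Finset.mem_union_right _ ((mem_cutsOf χ).2 ⟨hepm, ?_⟩))
    rw [← embOf_predOf χ hW p hpm]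
    exact hpω

end Part3

section Part4

open Finset

variable {n : ℕ} [NeZero n] (χ : Fin n → Bool) {K : Type*} {C : Finset (Fin n)} {j₀ : Fin n}
  (ω : Fin n → K) {V : Finset (Fin n)}

lemma startOf_emb [NeZero V.card] (hW : V = blkOf χ C j₀) (i : Fin V.card) :
    startOf χ (C ∪ cutsOf χ ω) (embOf V i)
      = embOf V (startOf (χ ∘ embOf V) (cutsOf (χ ∘ embOf V) (ω ∘ embOf V)) i) := by
  set χ' := χ ∘ embOf V with hχ'
  set ω' := ω ∘ embOf V with hω'
  apply startOf_unique χ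
  · exact embOf_mem_insert_cuts χ ω hW (startOf_mem_insert χ')
  · exact (chiRank_emb_le_iff χ _ _).1 (startOf_rank_le χ')
  · intro c hc hci
    have hsV : embOf V (startOf χ' (cutsOf χ' ω') i) ∈ V := embOf_mem _
    have hRvs : chiRank χ (startOf χ C j₀)
        ≤ chiRank χ (embOf V (startOf χ' (cutsOf χ' ω') i)) :=
      blkOf_rank_le χ (show _ ∈ blkOf χ C j₀ by rw [← hW]; exact hsV)
    by_cases hcv : chiRank χ c ≤ chiRank χ (startOf χ C j₀)
    · omega
    · push_neg at hcv
      have hcV : c ∈ V := by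
        rcases lt_or_eq_of_le hci with h | h
        · exact hW ▸ blkOf_interval χ (startOf χ C j₀) c (embOf V i)
            (startOf_mem_blkOf χ) (hW ▸ embOf_mem i) hcv h
        · rw [chiRank_injective χ h]; exact embOf_mem i
      obtain ⟨q, hq⟩ := embOf_surjOn hcV
      have hqmem : q ∈ insert (chiMin χ') (cutsOf χ' ω') := by
        rcases Finset.mem_insert.1 hc with h | h
        · exfalso
          have := chiMin_le χ (startOf χ C j₀)
          rw [h] at hcv; omega
        · rcases Finset.mem_union.1 h with h' | h'
          · exfalso
            have heq := eq_startOf_of_mem_insert χ (mem_insert_of_mem h') (hW ▸ hcV)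
            rw [heq] at hcv; omega
          · obtain ⟨hcm, hcω⟩ := (mem_cutsOf χ).1 h'
            have hqm : q ≠ chiMin χ' := by
              intro hh
              rw [hh, embOf_chiMin χ hW] at hq
              rw [← hq] at hcv; omega
            apply mem_insert_of_mem
            refine (mem_cutsOf χ').2 ⟨hqm, ?_⟩
            show ω (embOf V (predOf χ' q)) ≠ ω (embOf V q)
            rw [embOf_predOf χ hW q hqm, hq]
            exact hcω
      have h5 : chiRank χ' q ≤ chiRank χ' i :=
        (chiRank_emb_le_iff χ q i).2 (by rw [hq]; exact hci)
      have h6 := le_startOf χ' hqmem h5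
      have h7 := (chiRank_emb_le_iff χ q _).1 h6
      rw [hq] at h7
      exact h7

lemma map_blkOf_emb [NeZero V.card] (hW : V = blkOf χ C j₀) (i : Fin V.card) :
    (blkOf (χ ∘ embOf V) (cutsOf (χ ∘ embOf V) (ω ∘ embOf V)) i).map
        ⟨embOf V, embOf_injective⟩
      = blkOf χ (C ∪ cutsOf χ ω) (embOf V i) := by
  ext x
  simp only [Finset.mem_map, Function.Embedding.coeFn_mk]
  constructor
  · rintro ⟨p, hp, rfl⟩
    rw [mem_blkOf] at hp ⊢
    rw [startOf_emb χ ω hW p, startOf_emb χ ω hW i, hp]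
  · intro hx
    have hxV : x ∈ V := by
      have h1 : x ∈ blkOf χ C (embOf V i) :=
        blkOf_mono χ Finset.subset_union_left ((mem_blkOf χ).2 ((mem_blkOf χ).1 hx))
      rw [blkOf_eq_of_mem χ (show embOf V i ∈ blkOf χ C j₀ by rw [← hW]; exact embOf_mem i)] at h1
      rw [hW]; exact h1
    obtain ⟨p, rfl⟩ := embOf_surjOn hxV
    refine ⟨p, ?_, rfl⟩
    rw [mem_blkOf] at hx ⊢
    apply embOf_injective
    rw [← startOf_emb χ ω hW p, ← startOf_emb χ ω hW i]
    exact hx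

lemma filter_Pc_eq_image [NeZero V.card] (hW : V = blkOf χ C j₀) :
    (Pc χ (C ∪ cutsOf χ ω)).filter (· ⊆ V)
      = (Pc (χ ∘ embOf V) (cutsOf (χ ∘ embOf V) (ω ∘ embOf V))).image
          (Finset.map ⟨embOf V, embOf_injective⟩) := by
  ext W'
  constructor
  · intro h
    obtain ⟨hmem, hsub⟩ := Finset.mem_filter.1 h
    obtain ⟨x, rfl⟩ := (mem_Pc χ).1 hmem
    have hx : x ∈ V := hsub (self_mem_blkOf χ)
    obtain ⟨i, rfl⟩ := embOf_surjOn hx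
    rw [Finset.mem_image]
    exact ⟨_, (mem_Pc _).2 ⟨i, rfl⟩, map_blkOf_emb χ ω hW i⟩
  · intro h
    obtain ⟨W'', hW'', rfl⟩ := Finset.mem_image.1 h
    obtain ⟨i, rfl⟩ := (mem_Pc _).1 hW''
    rw [map_blkOf_emb χ ω hW i]
    refine Finset.mem_filter.2 ⟨(mem_Pc χ).2 ⟨embOf V i, rfl⟩, ?_⟩
    intro x hx
    have h1 : x ∈ blkOf χ C (embOf V i) := blkOf_mono χ Finset.subset_union_left hx
    rw [blkOf_eq_of_mem χ (show embOf V i ∈ blkOf χ C j₀ by rw [← hW]; exact embOf_mem i)] at h1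
    rw [hW]; exact h1

lemma sort_map_emb (W : Finset (Fin V.card)) :
    (W.map ⟨embOf V, embOf_injective⟩).sort (· ≤ ·) = (W.sort (· ≤ ·)).map (embOf V) := by
  refine List.Perm.eq_of_pairwise' (r := (· ≤ ·)) (Finset.pairwise_sort _ _)
    (List.Pairwise.map _ (fun a b hab => embOf_strictMono.monotone hab)
      (Finset.pairwise_sort W (· ≤ ·))) ?_
  · apply Multiset.coe_eq_coe.1
    have h1 : ((W.map ⟨embOf V, embOf_injective⟩).sort (· ≤ ·) : Multiset (Fin n))
        = (W.map ⟨embOf V, embOf_injective⟩).val := Finset.sort_eq _ _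
    rw [h1, Finset.map_val]
    have h2 : W.val = ((W.sort (· ≤ ·) : List (Fin V.card)) : Multiset (Fin V.card)) :=
      (Finset.sort_eq _ _).symm
    rw [h2, Multiset.map_coe]
    rfl

lemma phiV_map_emb {A : Type*} [Monoid A] (φ : A → ℂ) (a : Fin n → A)
    (W : Finset (Fin V.card)) :
    phiV φ a (W.map ⟨embOf V, embOf_injective⟩) = phiV φ (a ∘ embOf V) W := by
  unfold phiV
  rw [sort_map_emb, List.map_map]

lemma phiV_blk {A : Type*} [Monoid A] (φ : A → ℂ) (a : Fin n → A) :
    phiV φ a V = φ (List.ofFn (a ∘ embOf V)).prod := by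
  unfold phiV
  rw [← ofFn_embOf, List.map_ofFn]

lemma phiV_univ {A : Type*} [Monoid A] (φ : A → ℂ) (a : Fin n → A) :
    phiV φ a univ = φ (List.ofFn a).prod := by
  unfold phiV
  rw [Fin.sort_univ, ← List.ofFn_eq_map]

end Part4

section Part5

open Finset

variable {n : ℕ} [NeZero n] (χ : Fin n → Bool) {K : Type*} (ω : Fin n → K)

lemma prod_Pc_union {A : Type*} [Monoid A] (φ : A → ℂ) (a : Fin n → A) (C : Finset (Fin n))
    (H : ∀ V' : Finset (Fin n), V' ∈ Pc χ C → [NeZero V'.card] →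
      φ (List.ofFn (a ∘ embOf V')).prod =
        ∏ W ∈ Pc (χ ∘ embOf V') (cutsOf (χ ∘ embOf V') (ω ∘ embOf V')),
          phiV φ (a ∘ embOf V') W) :
    ∏ V' ∈ Pc χ C, phiV φ a V' = ∏ W ∈ Pc χ (C ∪ cutsOf χ ω), phiV φ a W := by
  have hmaps : ∀ W ∈ Pc χ (C ∪ cutsOf χ ω),
      blkOf χ C (pickMin W (chiRank χ)) ∈ Pc χ C := by
    intro W _
    exact (mem_Pc χ).2 ⟨_, rfl⟩
  rw [← Finset.prod_fiberwise_of_maps_to hmaps (phiV φ a)]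
  apply Finset.prod_congr rfl
  intro V' hV'
  obtain ⟨j₀, rfl⟩ := (mem_Pc χ).1 hV'
  haveI : NeZero (blkOf χ C j₀).card :=
    ⟨Nat.pos_iff_ne_zero.1 (Finset.card_pos.2 ⟨j₀, self_mem_blkOf χ⟩)⟩
  have hfil : (Pc χ (C ∪ cutsOf χ ω)).filter
        (fun W => blkOf χ C (pickMin W (chiRank χ)) = blkOf χ C j₀)
      = (Pc χ (C ∪ cutsOf χ ω)).filter (· ⊆ blkOf χ C j₀) := by
    apply Finset.filter_congr
    intro W hW
    obtain ⟨y, rfl⟩ := (mem_Pc χ).1 hW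
    have hpm : pickMin (blkOf χ (C ∪ cutsOf χ ω) y) (chiRank χ) ∈ blkOf χ (C ∪ cutsOf χ ω) y :=
      pickMin_mem ⟨y, self_mem_blkOf χ⟩
    constructor
    · intro hgW
      intro x hx
      rw [← hgW]
      exact blkOf_mono χ Finset.subset_union_left
        ((blkOf_eq_of_mem χ hpm).symm ▸ hx)
    · intro hsub
      exact blkOf_eq_of_mem χ (hsub hpm)
  rw [hfil, filter_Pc_eq_image χ ω rfl, Finset.prod_image
    (fun W₁ _ W₂ _ h => Finset.map_injective _ h)]
  have hstep : ∀ W ∈ Pc (χ ∘ embOf (blkOf χ C j₀))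
      (cutsOf (χ ∘ embOf (blkOf χ C j₀)) (ω ∘ embOf (blkOf χ C j₀))),
      phiV φ a (W.map ⟨embOf (blkOf χ C j₀), embOf_injective⟩)
        = phiV φ (a ∘ embOf (blkOf χ C j₀)) W := by
    intro W _
    exact phiV_map_emb φ a W
  rw [Finset.prod_congr rfl hstep, ← H _ hV', phiV_blk]

lemma neg_one_pow_powerset_sum {α : Type*} [DecidableEq α] {D : Finset α} (hD : D.Nonempty) :
    ∑ s ∈ D.powerset, (-1 : ℂ) ^ s.card = 0 := by
  have h := Finset.sum_powerset_neg_one_pow_card_of_nonempty hD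
  have := congrArg (fun z : ℤ => (z : ℂ)) h
  push_cast at this
  simpa using this

lemma alt_sum {α : Type*} [DecidableEq α] (G D : Finset α) (hD : D ⊆ G) (hDne : D.Nonempty)
    (m : Finset α → ℂ) (hm : ∀ C ∈ G.powerset, C.Nonempty → m C = m (C ∪ D)) :
    ∑ C ∈ G.powerset, (-1 : ℂ) ^ C.card * m C = m ∅ - m D := by
  have h0 : (∅ : Finset α) ∈ G.powerset := Finset.empty_mem_powerset G
  have hT : (∑ C ∈ G.powerset, (-1 : ℂ) ^ C.card * m (C ∪ D)) = 0 := by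
    have hbij : (∑ C ∈ G.powerset, (-1 : ℂ) ^ C.card * m (C ∪ D))
        = ∑ p ∈ (G \ D).powerset ×ˢ D.powerset, (-1 : ℂ) ^ (p.1 ∪ p.2).card * m ((p.1 ∪ p.2) ∪ D) := by
      apply Finset.sum_nbij' (i := fun C => (C \ D, C ∩ D)) (j := fun p => p.1 ∪ p.2)
      · intro C hC
        rw [Finset.mem_powerset] at hC
        rw [Finset.mem_product, Finset.mem_powerset, Finset.mem_powerset]
        exact ⟨Finset.sdiff_subset_sdiff hC le_rfl, Finset.inter_subset_right⟩
      · intro p hp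
        rw [Finset.mem_product, Finset.mem_powerset, Finset.mem_powerset] at hp
        rw [Finset.mem_powerset]
        exact Finset.union_subset (hp.1.trans (Finset.sdiff_subset)) (hp.2.trans hD)
      · intro C _
        exact Finset.sdiff_union_inter C D
      · intro p hp
        rw [Finset.mem_product, Finset.mem_powerset, Finset.mem_powerset] at hp
        have hdisj : Disjoint p.1 D := Finset.disjoint_left.2
          (fun x hx hxD => (Finset.mem_sdiff.1 (hp.1 hx)).2 hxD)
        have h1 : (p.1 ∪ p.2) \ D = p.1 := by
          rw [Finset.union_sdiff_distrib, Finset.sdiff_eq_self_of_disjoint hdisj,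
            Finset.sdiff_eq_empty_iff_subset.2 hp.2, Finset.union_empty]
        have h2 : (p.1 ∪ p.2) ∩ D = p.2 := by
          rw [Finset.union_inter_distrib_right, (Finset.inter_eq_left).2 hp.2]
          rw [Finset.disjoint_iff_inter_eq_empty.1 hdisj, Finset.empty_union]
        exact Prod.ext h1 h2
      · intro C hC
        rw [Finset.sdiff_union_inter C D]
    rw [hbij, Finset.sum_product]
    apply Finset.sum_eq_zero
    intro x hx
    rw [Finset.mem_powerset] at hx
    have hxd : Disjoint x D := Finset.disjoint_left.2
      (fun t ht htD => (Finset.mem_sdiff.1 (hx ht)).2 htD)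
    have : ∀ y ∈ D.powerset, (-1 : ℂ) ^ (x ∪ y).card * m ((x ∪ y) ∪ D)
        = ((-1 : ℂ) ^ y.card) * ((-1 : ℂ) ^ x.card * m (x ∪ D)) := by
      intro y hy
      rw [Finset.mem_powerset] at hy
      have hdisj : Disjoint x y := hxd.mono_right hy
      have hcard : (x ∪ y).card = x.card + y.card := Finset.card_union_of_disjoint hdisj
      have hu : (x ∪ y) ∪ D = x ∪ D := by
        rw [Finset.union_assoc, Finset.union_eq_right.2 hy]
      rw [hcard, hu, pow_add]
      ring
    rw [Finset.sum_congr rfl this, ← Finset.sum_mul, neg_one_pow_powerset_sum hDne, zero_mul]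
  have hsum2 : (∑ C ∈ G.powerset.erase ∅, (-1 : ℂ) ^ C.card * m C)
      = ∑ C ∈ G.powerset.erase ∅, (-1 : ℂ) ^ C.card * m (C ∪ D) := by
    apply Finset.sum_congr rfl
    intro C hC
    rw [hm C (Finset.mem_of_mem_erase hC)
      (Finset.nonempty_iff_ne_empty.2 (Finset.ne_of_mem_erase hC))]
  have hsum3 : (∑ C ∈ G.powerset.erase ∅, (-1 : ℂ) ^ C.card * m (C ∪ D))
      = (∑ C ∈ G.powerset, (-1 : ℂ) ^ C.card * m (C ∪ D)) - m D := by
    rw [← Finset.sum_erase_add _ _ h0]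
    simp
  rw [← Finset.sum_erase_add _ (fun C => (-1 : ℂ) ^ C.card * m C) h0, hsum2, hsum3, hT]
  simp only [Finset.card_empty, pow_zero, one_mul]
  ring

lemma Bcum_eq_sum_cuts {A : Type*} [Monoid A] (φ : A → ℂ) (a : Fin n → A) :
    Bcum φ χ a = ∑ C ∈ (Finset.univ.erase (chiMin χ)).powerset,
      (-1 : ℂ) ^ C.card * ∏ V' ∈ Pc χ C, phiV φ a V' := by
  rw [Bcum]
  apply Finset.sum_nbij' (i := fun P => recoverC χ P) (j := fun C => Pc χ C)
  · intro P hP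
    obtain ⟨C, hCsub, rfl⟩ := exists_C_of_BIset χ hP
    have hCm : chiMin χ ∉ C := fun h => (Finset.mem_erase.1 (hCsub h)).1 rfl
    rw [recoverC_Pc χ hCm, Finset.mem_powerset]
    exact hCsub
  · intro C _
    exact Pc_mem_BIset χ
  · intro P hP
    obtain ⟨C, hCsub, rfl⟩ := exists_C_of_BIset χ hP
    have hCm : chiMin χ ∉ C := fun h => (Finset.mem_erase.1 (hCsub h)).1 rfl
    rw [recoverC_Pc χ hCm]
  · intro C hC
    rw [Finset.mem_powerset] at hC
    have hCm : chiMin χ ∉ C := fun h => (Finset.mem_erase.1 (hC h)).1 rfl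
    rw [recoverC_Pc χ hCm]
  · intro P hP
    obtain ⟨C, hCsub, rfl⟩ := exists_C_of_BIset χ hP
    have hCm : chiMin χ ∉ C := fun h => (Finset.mem_erase.1 (hCsub h)).1 rfl
    rw [recoverC_Pc χ hCm, card_Pc χ hCm]
    simp

end Part5

/-- A family of pairs of (not necessarily unital) subalgebras of a non-commutative
probability space is bi-Boolean independent iff all its mixed Boolean (l,r)-cumulants
vanish. -/
theorem biBooleanIndep_iff_mixed_cumulants_vanish
    {A : Type*} [Ring A] [Algebra ℂ A] (φ : A →ₗ[ℂ] ℂ) (hφ1 : φ 1 = 1)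
    {K : Type*} (Al Ar : K → NonUnitalSubalgebra ℂ A) :
    BiBooleanIndep (fun z => φ z) Al Ar ↔
      ∀ n : ℕ, 2 ≤ n → ∀ χ : Fin n → Bool, ∀ ω : Fin n → K,
        (¬ ∀ i j : Fin n, ω i = ω j) → ∀ a : Fin n → A,
        (∀ i, a i ∈ (if χ i then Al (ω i) else Ar (ω i))) →
        Bcum (fun z => φ z) χ a = 0 := by
  constructor
  · intro hInd n hn χ ω hω a ha
    haveI : NeZero n := ⟨by omega⟩
    have hDsub : cutsOf χ ω ⊆ Finset.univ.erase (chiMin χ) := cutsOf_subset χ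
    have hDne : (cutsOf χ ω).Nonempty := cutsOf_nonempty χ hω
    have hsplit : ∀ C : Finset (Fin n),
        (∏ V' ∈ Pc χ C, phiV (fun z => φ z) a V')
          = ∏ V' ∈ Pc χ (C ∪ cutsOf χ ω), phiV (fun z => φ z) a V' := by
      intro C
      apply prod_Pc_union χ ω
      intro V' hV' hNZ
      haveI := hNZ
      exact hInd V'.card (Nat.one_le_iff_ne_zero.2 hNZ.out) (χ ∘ embOf V') (ω ∘ embOf V')
        (a ∘ embOf V') (fun i => ha (embOf V' i)) _ (isMaxKernelBI_Pc_cutsOf (χ ∘ embOf V'))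
    rw [Bcum_eq_sum_cuts χ (fun z => φ z) a]
    rw [alt_sum (Finset.univ.erase (chiMin χ)) (cutsOf χ ω) hDsub hDne
      (fun C => ∏ V' ∈ Pc χ C, phiV (fun z => φ z) a V')
      (fun C _ _ => hsplit C)]
    have h0 := hsplit ∅
    rw [Finset.empty_union] at h0
    exact sub_eq_zero_of_eq h0
  · intro hVan
    suffices H : ∀ N : ℕ, ∀ n : ℕ, n ≤ N → 1 ≤ n →
        ∀ (χ : Fin n → Bool) (ω : Fin n → K) (a : Fin n → A),
        (∀ i, a i ∈ (if χ i then Al (ω i) else Ar (ω i))) →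
        ∀ P : Finset (Finset (Fin n)), IsMaxKernelBI χ ω P →
          φ (List.ofFn a).prod = ∏ V ∈ P, phiV (fun z => φ z) a V by
      intro n hn χ ω a ha P hP
      exact H n n le_rfl hn χ ω a ha P hP
    intro N
    induction N with
    | zero => intro n hn h1; omega
    | succ N IH =>
      intro n hn h1 χ ω a ha P hP
      haveI : NeZero n := ⟨by omega⟩
      rw [isMaxKernelBI_unique χ hP]
      have hLHS : φ (List.ofFn a).prod
          = ∏ V' ∈ Pc χ (∅ : Finset (Fin n)), phiV (fun z => φ z) a V' := by
        rw [Pc_empty χ, Finset.prod_singleton, phiV_univ]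
      by_cases hconst : ∀ i j : Fin n, ω i = ω j
      · rw [cutsOf_eq_empty_of_constant χ hconst, ← hLHS]
      · have hn2 : 2 ≤ n := by
          by_contra hcon
          apply hconst
          intro i j
          have hi := i.isLt
          have hj := j.isLt
          have : i = j := Fin.ext (by omega)
          rw [this]
        have hB := hVan n hn2 χ ω hconst a ha
        rw [Bcum_eq_sum_cuts χ (fun z => φ z) a] at hB
        have hDsub : cutsOf χ ω ⊆ Finset.univ.erase (chiMin χ) := cutsOf_subset χ
        have hDne : (cutsOf χ ω).Nonempty := cutsOf_nonempty χ hconst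
        have hsplit : ∀ C ∈ (Finset.univ.erase (chiMin χ)).powerset, C.Nonempty →
            (∏ V' ∈ Pc χ C, phiV (fun z => φ z) a V')
              = ∏ V' ∈ Pc χ (C ∪ cutsOf χ ω), phiV (fun z => φ z) a V' := by
          intro C hC hCne
          apply prod_Pc_union χ ω
          intro V' hV' hNZ
          haveI := hNZ
          have hcard : V'.card < n := card_blk_lt χ (Finset.mem_powerset.1 hC) hCne hV'
          exact IH V'.card (by omega) (Nat.one_le_iff_ne_zero.2 hNZ.out)
            (χ ∘ embOf V') (ω ∘ embOf V') (a ∘ embOf V')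
            (fun i => ha (embOf V' i)) _ (isMaxKernelBI_Pc_cutsOf (χ ∘ embOf V'))
        rw [alt_sum (Finset.univ.erase (chiMin χ)) (cutsOf χ ω) hDsub hDne
          (fun C => ∏ V' ∈ Pc χ C, phiV (fun z => φ z) a V') hsplit] at hB
        rw [hLHS]
        exact sub_eq_zero.1 hB
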